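/- Under the diminishing learning-rate assumptions, for every Y ∈ Δ: limsup_{K→∞} (1/A_K) ∑_{k=0}^K α_k (Y − X^k)·CX^k ≤ 0. -/

import Mathlib

open Filter Topology Finset Matrix

noncomputable section

/-- Membership in the probability simplex Δ ⊆ ℝ^n. -/
def isSimplex {n : ℕ} (X : Fin n → ℝ) : Prop :=
  (∀ i, 0 ≤ X i) ∧ ∑ i, X i = 1

/-- Interior point of the probability simplex. -/
def isInteriorPt {n : ℕ} (X : Fin n → ℝ) : Prop :=
  (∀ i, 0 < X i) ∧ ∑ i, X i = 1

/-- The Hedge map T_α. -/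
noncomputable def hedge {n : ℕ} (C : Matrix (Fin n) (Fin n) ℝ) (a : ℝ) (X : Fin n → ℝ) :
    Fin n → ℝ :=
  fun i => X i * Real.exp (a * C.mulVec X i) / ∑ j, X j * Real.exp (a * C.mulVec X j)

/-- Hedge iterates: X^0 = X0, X^{k+1} = T_{α_k}(X^k). -/
noncomputable def hiter {n : ℕ} (C : Matrix (Fin n) (Fin n) ℝ) (a : ℕ → ℝ) (X0 : Fin n → ℝ) :
    ℕ → Fin n → ℝ
  | 0 => X0
  | k + 1 => hedge C (a k) (hiter C a X0 k)

/-- A_K = ∑_{k=0}^K α_k. -/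
noncomputable def pSum (a : ℕ → ℝ) (K : ℕ) : ℝ := ∑ k ∈ Finset.range (K + 1), a k

/-- Weighted empirical average X̄^K = (1/A_K) ∑_{k=0}^K α_k X^k. -/
noncomputable def wavg {n : ℕ} (C : Matrix (Fin n) (Fin n) ℝ) (a : ℕ → ℝ) (X0 : Fin n → ℝ)
    (K : ℕ) : Fin n → ℝ :=
  (pSum a K)⁻¹ • ∑ k ∈ Finset.range (K + 1), a k • hiter C a X0 k

/-- Relative entropy RE(Y, X) = ∑_{i : Y(i) > 0} Y(i) ln(Y(i)/X(i)). -/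
noncomputable def RE {n : ℕ} (Y X : Fin n → ℝ) : ℝ :=
  ∑ i ∈ Finset.univ.filter (fun i => 0 < Y i), Y i * Real.log (Y i / X i)

/-- (CX)_max = max_i (CX)_i. -/
noncomputable def cmax {n : ℕ} (C : Matrix (Fin n) (Fin n) ℝ) (X : Fin n → ℝ) : ℝ :=
  ⨆ i, C.mulVec X i

/-- X̄ is a limit point of the sequence of weighted empirical averages. -/
def isLimitPoint {n : ℕ} (C : Matrix (Fin n) (Fin n) ℝ) (a : ℕ → ℝ) (X0 : Fin n → ℝ)
    (Xb : Fin n → ℝ) : Prop :=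
  ∃ φ : ℕ → ℕ, StrictMono φ ∧ Tendsto (fun j => wavg C a X0 (φ j)) atTop (𝓝 Xb)
-- auxiliary lemmas

lemma aux_exp1 {x : ℝ} (hx : 0 ≤ x) : Real.exp x - 1 ≤ x * Real.exp x := by
  have h := Real.add_one_le_exp (-x)
  have h2 : Real.exp (-x) * Real.exp x = 1 := by rw [← Real.exp_add]; simp
  nlinarith [Real.exp_pos x, mul_le_mul_of_nonneg_right h (Real.exp_pos x).le]

lemma aux_eps {x : ℝ} (hx : 0 ≤ x) : Real.exp x - 1 - x ≤ x ^ 2 * Real.exp x := by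
  have h1 := aux_exp1 hx
  have h2 := mul_le_mul_of_nonneg_left (aux_exp1 hx) hx
  nlinarith

lemma hedge_Z_pos {n : ℕ} (C : Matrix (Fin n) (Fin n) ℝ) (α : ℝ) {X : Fin n → ℝ}
    (hX : isInteriorPt X) : 0 < ∑ j, X j * Real.exp (α * C.mulVec X j) := by
  have hne : (Finset.univ : Finset (Fin n)).Nonempty := by
    by_contra h
    rw [Finset.not_nonempty_iff_eq_empty] at h
    have := hX.2
    rw [h] at this
    simp at this
  exact Finset.sum_pos (fun j _ => mul_pos (hX.1 j) (Real.exp_pos _)) hne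

lemma hedge_interior {n : ℕ} (C : Matrix (Fin n) (Fin n) ℝ) (α : ℝ) {X : Fin n → ℝ}
    (hX : isInteriorPt X) : isInteriorPt (hedge C α X) := by
  have hZ := hedge_Z_pos C α hX
  constructor
  · intro i
    exact div_pos (mul_pos (hX.1 i) (Real.exp_pos _)) hZ
  · unfold hedge
    rw [← Finset.sum_div, div_self hZ.ne']

lemma mulVec_nonneg' {n : ℕ} {C : Matrix (Fin n) (Fin n) ℝ} (hC : ∀ i j, 0 ≤ C i j)
    {X : Fin n → ℝ} (hXnn : ∀ i, 0 ≤ X i) (i : Fin n) : 0 ≤ C.mulVec X i := by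
  unfold Matrix.mulVec dotProduct
  exact Finset.sum_nonneg fun j _ => mul_nonneg (hC i j) (hXnn j)

lemma mulVec_le_B {n : ℕ} {C : Matrix (Fin n) (Fin n) ℝ} (hC : ∀ i j, 0 ≤ C i j)
    {X : Fin n → ℝ} (hXnn : ∀ i, 0 ≤ X i) (hXs : ∑ i, X i = 1) (i : Fin n) :
    C.mulVec X i ≤ (∑ i, ∑ j, C i j) + 1 := by
  have hX1 : ∀ j, X j ≤ 1 := by
    intro j
    rw [← hXs]
    exact Finset.single_le_sum (fun k _ => hXnn k) (Finset.mem_univ j)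
  have h1 : C.mulVec X i ≤ ∑ j, C i j := by
    unfold Matrix.mulVec dotProduct
    apply Finset.sum_le_sum
    intro j _
    calc C i j * X j ≤ C i j * 1 := mul_le_mul_of_nonneg_left (hX1 j) (hC i j)
      _ = C i j := mul_one _
  have h2 : ∑ j, C i j ≤ ∑ i, ∑ j, C i j :=
    Finset.single_le_sum (fun k _ => Finset.sum_nonneg fun j _ => hC k j) (Finset.mem_univ i)
  linarith

lemma sum_filter_pos_eq {n : ℕ} {Y : Fin n → ℝ} (hYnn : ∀ i, 0 ≤ Y i) (f : Fin n → ℝ) :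
    ∑ i ∈ Finset.univ.filter (fun i => 0 < Y i), Y i * f i = ∑ i, Y i * f i := by
  apply Finset.sum_filter_of_ne
  intro i _ h
  rcases (hYnn i).lt_or_eq with h' | h'
  · exact h'
  · exact absurd (by rw [← h', mul_comm]; ring) h

lemma RE_nonneg {n : ℕ} {Y X : Fin n → ℝ} (hY : isSimplex Y) (hX : isInteriorPt X) :
    0 ≤ RE Y X := by
  have hfilY : ∑ i ∈ Finset.univ.filter (fun i => 0 < Y i), Y i = 1 := by
    rw [Finset.sum_filter_of_ne, hY.2]
    intro i _ h
    exact lt_of_le_of_ne (hY.1 i) (Ne.symm h)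
  have key : ∀ i ∈ Finset.univ.filter (fun i => 0 < Y i),
      Y i - X i ≤ Y i * Real.log (Y i / X i) := by
    intro i hi
    have hYi : 0 < Y i := (Finset.mem_filter.mp hi).2
    have hXi := hX.1 i
    have hlog : Real.log (X i / Y i) ≤ X i / Y i - 1 :=
      Real.log_le_sub_one_of_pos (div_pos hXi hYi)
    have heq : Real.log (Y i / X i) = - Real.log (X i / Y i) := by
      rw [← Real.log_inv, inv_div]
    rw [heq]
    have h2 := mul_le_mul_of_nonneg_left hlog hYi.le
    have h3 : Y i * (X i / Y i - 1) = X i - Y i := by field_simp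
    nlinarith
  have h4 : ∑ i ∈ Finset.univ.filter (fun i => 0 < Y i), (Y i - X i) ≤ RE Y X :=
    Finset.sum_le_sum key
  have h5 : ∑ i ∈ Finset.univ.filter (fun i => 0 < Y i), X i ≤ ∑ i, X i :=
    Finset.sum_le_sum_of_subset_of_nonneg (Finset.filter_subset _ _)
      (fun i _ _ => (hX.1 i).le)
  rw [Finset.sum_sub_distrib, hfilY] at h4
  rw [hX.2] at h5
  linarith

-- per-step inequality
lemma step_ineq {n : ℕ} (C : Matrix (Fin n) (Fin n) ℝ) (hC : ∀ i j, 0 ≤ C i j)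
    {α : ℝ} (hα : 0 < α) {X Y : Fin n → ℝ} (hX : isInteriorPt X) (hY : isSimplex Y) :
    α * ((Y - X) ⬝ᵥ C.mulVec X) ≤
      RE Y X - RE Y (hedge C α X)
        + (Real.exp (α * ((∑ i, ∑ j, C i j) + 1)) - 1 - α * ((∑ i, ∑ j, C i j) + 1)) := by
  set B : ℝ := (∑ i, ∑ j, C i j) + 1 with hBdef
  have hB : 0 < B := by
    have : 0 ≤ ∑ i, ∑ j, C i j :=
      Finset.sum_nonneg fun i _ => Finset.sum_nonneg fun j _ => hC i j
    linarith
  set c : Fin n → ℝ := C.mulVec X with hcdef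
  have hc0 : ∀ i, 0 ≤ c i := mulVec_nonneg' hC (fun i => (hX.1 i).le)
  have hcB : ∀ i, c i ≤ B := mulVec_le_B hC (fun i => (hX.1 i).le) hX.2
  set Z : ℝ := ∑ j, X j * Real.exp (α * c j) with hZdef
  have hZ : 0 < Z := hedge_Z_pos C α hX
  -- RE identity
  have hRE : RE Y X - RE Y (hedge C α X) = α * (Y ⬝ᵥ c) - Real.log Z := by
    unfold RE
    rw [← Finset.sum_sub_distrib]
    have : ∀ i ∈ Finset.univ.filter (fun i => 0 < Y i),
        Y i * Real.log (Y i / X i) - Y i * Real.log (Y i / hedge C α X i)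
          = Y i * (α * c i) - Y i * Real.log Z := by
      intro i hi
      have hYi : 0 < Y i := (Finset.mem_filter.mp hi).2
      have hXi := hX.1 i
      have hTi : hedge C α X i = X i * Real.exp (α * c i) / Z := rfl
      have hTpos : 0 < hedge C α X i := (hedge_interior C α hX).1 i
      rw [Real.log_div hYi.ne' hXi.ne', Real.log_div hYi.ne' hTpos.ne', hTi,
        Real.log_div (by positivity) hZ.ne', Real.log_mul hXi.ne' (Real.exp_pos _).ne',
        Real.log_exp]
      ring
    rw [Finset.sum_congr rfl this, Finset.sum_sub_distrib,
      sum_filter_pos_eq hY.1 (fun i => α * c i)]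
    have hfilY : ∑ i ∈ Finset.univ.filter (fun i => 0 < Y i), Y i * Real.log Z
        = Real.log Z := by
      rw [← Finset.sum_mul]
      have : ∑ i ∈ Finset.univ.filter (fun i => 0 < Y i), Y i = 1 := by
        rw [Finset.sum_filter_of_ne, hY.2]
        intro i _ h
        exact lt_of_le_of_ne (hY.1 i) (Ne.symm h)
      rw [this, one_mul]
    rw [hfilY]
    unfold dotProduct
    rw [Finset.mul_sum]
    congr 1
    apply Finset.sum_congr rfl
    intro i _
    ring
  -- log Z bound
  have hlogZ : Real.log Z ≤ (Real.exp (α * B) - 1) / B * (X ⬝ᵥ c) := by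
    have h1 : Real.log Z ≤ Z - 1 := Real.log_le_sub_one_of_pos hZ
    have h2 : Z ≤ 1 + (Real.exp (α * B) - 1) / B * (X ⬝ᵥ c) := by
      have hpt : ∀ j, Real.exp (α * c j) ≤ 1 + c j / B * (Real.exp (α * B) - 1) := by
        intro j
        set t : ℝ := c j / B with htdef
        have ht0 : 0 ≤ t := div_nonneg (hc0 j) hB.le
        have ht1 : t ≤ 1 := (div_le_one hB).mpr (hcB j)
        have hconv : Real.exp (t * (α * B) + (1 - t) * 0)
            ≤ t * Real.exp (α * B) + (1 - t) * Real.exp 0 :=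
          convexOn_exp.2 (Set.mem_univ (α * B)) (Set.mem_univ 0)
            ht0 (by linarith) (by ring)
        have htB : t * B = c j := div_mul_cancel₀ _ hB.ne'
        have harg : t * (α * B) + (1 - t) * 0 = α * c j := by
          rw [← htB]; ring
        rw [harg, Real.exp_zero] at hconv
        linarith
      calc Z ≤ ∑ j, X j * (1 + c j / B * (Real.exp (α * B) - 1)) := by
              apply Finset.sum_le_sum
              intro j _
              exact mul_le_mul_of_nonneg_left (hpt j) (hX.1 j).le
        _ = (∑ j, X j) + (Real.exp (α * B) - 1) / B * ∑ j, X j * c j := by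
              rw [Finset.mul_sum, ← Finset.sum_add_distrib]
              apply Finset.sum_congr rfl
              intro j _
              field_simp
        _ = 1 + (Real.exp (α * B) - 1) / B * (X ⬝ᵥ c) := by rw [hX.2]; rfl
    linarith
  -- combine
  have hXc0 : 0 ≤ X ⬝ᵥ c := Finset.sum_nonneg fun i _ => mul_nonneg (hX.1 i).le (hc0 i)
  have hXcB : X ⬝ᵥ c ≤ B := by
    calc X ⬝ᵥ c ≤ ∑ i, X i * B :=
          Finset.sum_le_sum fun i _ => mul_le_mul_of_nonneg_left (hcB i) (hX.1 i).le
      _ = B := by rw [← Finset.sum_mul, hX.2, one_mul]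
  have hcoef : 0 ≤ (Real.exp (α * B) - 1) / B - α := by
    have := Real.add_one_le_exp (α * B)
    rw [sub_nonneg, le_div_iff₀ hB]
    linarith
  have hsplit : (Y - X) ⬝ᵥ c = Y ⬝ᵥ c - X ⬝ᵥ c := sub_dotProduct Y X c
  have hfin : ((Real.exp (α * B) - 1) / B - α) * (X ⬝ᵥ c)
      ≤ Real.exp (α * B) - 1 - α * B := by
    calc ((Real.exp (α * B) - 1) / B - α) * (X ⬝ᵥ c)
        ≤ ((Real.exp (α * B) - 1) / B - α) * B :=
          mul_le_mul_of_nonneg_left hXcB hcoef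
      _ = Real.exp (α * B) - 1 - α * B := by
          rw [sub_mul, div_mul_cancel₀ _ hB.ne']
  have : α * ((Y - X) ⬝ᵥ c) = (α * (Y ⬝ᵥ c) - Real.log Z)
      + (Real.log Z - α * (X ⬝ᵥ c)) := by rw [hsplit]; ring
  rw [this, ← hRE]
  have : Real.log Z - α * (X ⬝ᵥ c) ≤ Real.exp (α * B) - 1 - α * B := by
    calc Real.log Z - α * (X ⬝ᵥ c)
        ≤ (Real.exp (α * B) - 1) / B * (X ⬝ᵥ c) - α * (X ⬝ᵥ c) := by linarith
      _ = ((Real.exp (α * B) - 1) / B - α) * (X ⬝ᵥ c) := by ring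
      _ ≤ Real.exp (α * B) - 1 - α * B := hfin
  linarith

/-- limsup_{K→∞} (1/A_K) ∑_{k=0}^K α_k (Y − X^k)·CX^k ≤ 0. -/
theorem stmt13 {n : ℕ} (hn : 0 < n) (C : Matrix (Fin n) (Fin n) ℝ)
    (hC : ∀ i j, 0 ≤ C i j)
    (a : ℕ → ℝ) (hapos : ∀ k, 0 < a k)
    (ha0 : Tendsto a atTop (𝓝 0))
    (hadiv : Tendsto (pSum a) atTop atTop)
    (hasum : Summable fun k => a k * (Real.exp (a k) - 1))
    (X0 : Fin n → ℝ) (hX0 : isInteriorPt X0)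
    (Y : Fin n → ℝ) (hY : isSimplex Y) :
    Filter.limsup (fun K => (pSum a K)⁻¹ *
        ∑ k ∈ Finset.range (K + 1),
          a k * ((Y - hiter C a X0 k) ⬝ᵥ C.mulVec (hiter C a X0 k))) atTop ≤ 0 := by
  --
  set B : ℝ := (∑ i, ∑ j, C i j) + 1 with hBdef
  have hB : 0 < B := by
    have : 0 ≤ ∑ i, ∑ j, C i j :=
      Finset.sum_nonneg fun i _ => Finset.sum_nonneg fun j _ => hC i j
    linarith
  set X : ℕ → Fin n → ℝ := hiter C a X0 with hXdef
  have hint : ∀ k, isInteriorPt (X k) := by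
    intro k
    induction k with
    | zero => exact hX0
    | succ k ih => exact hedge_interior C (a k) ih
  set ε : ℕ → ℝ := fun k => Real.exp (a k * B) - 1 - a k * B with hεdef
  have hε0 : ∀ k, 0 ≤ ε k := by
    intro k
    have := Real.add_one_le_exp (a k * B)
    simp only [hεdef]
    linarith
  set b : ℕ → ℝ := fun k => a k * (Real.exp (a k) - 1) with hbdef
  have hb0 : ∀ k, 0 ≤ b k := by
    intro k
    have h1 := Real.add_one_le_exp (a k)
    have h2 := hapos k
    exact mul_nonneg h2.le (by linarith)
  -- per-step inequality
  have hstep : ∀ k, a k * ((Y - X k) ⬝ᵥ C.mulVec (X k))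
      ≤ RE Y (X k) - RE Y (X (k + 1)) + ε k := by
    intro k
    exact step_ineq C hC (hapos k) (hint k) hY
  -- bound on partial sums of ε
  obtain ⟨N, hN⟩ : ∃ N, ∀ k ≥ N, a k ≤ 1 := by
    obtain ⟨N, hN⟩ := eventually_atTop.mp (ha0.eventually_lt_const one_pos)
    exact ⟨N, fun k hk => (hN k hk).le⟩
  set D : ℝ := B ^ 2 * Real.exp B with hDdef
  have hD : 0 ≤ D := by positivity
  have hεb : ∀ k ≥ N, ε k ≤ D * b k := by
    intro k hk
    have hak := hapos k
    have hak1 := hN k hk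
    have h1 : ε k ≤ (a k * B) ^ 2 * Real.exp (a k * B) :=
      aux_eps (by positivity)
    have h2 : Real.exp (a k * B) ≤ Real.exp B := by
      apply Real.exp_le_exp.mpr
      nlinarith
    have h3 : a k ≤ Real.exp (a k) - 1 := by
      have := Real.add_one_le_exp (a k)
      linarith
    have h4 : (a k * B) ^ 2 * Real.exp (a k * B) ≤ a k ^ 2 * B ^ 2 * Real.exp B := by
      have : (a k * B) ^ 2 = a k ^ 2 * B ^ 2 := by ring
      rw [this]
      apply mul_le_mul_of_nonneg_left h2 (by positivity)
    have h5 : a k ^ 2 * B ^ 2 * Real.exp B ≤ D * b k := by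
      simp only [hDdef, hbdef]
      have : a k ^ 2 ≤ a k * (Real.exp (a k) - 1) := by nlinarith
      nlinarith [Real.exp_pos B]
    linarith
  set S : ℝ := (∑ k ∈ Finset.range N, ε k) + D * ∑' k, b k with hSdef
  have hεsum : ∀ m, ∑ k ∈ Finset.range m, ε k ≤ S := by
    intro m
    have hpt : ∀ k ∈ Finset.range m,
        ε k ≤ (if k < N then ε k else 0) + D * b k := by
      intro k _
      by_cases hk : k < N
      · simp only [hk, if_true]
        nlinarith [hb0 k, hD]
      · simp only [hk, if_false]
        push_neg at hk
        have := hεb k hk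
        linarith
    calc ∑ k ∈ Finset.range m, ε k
        ≤ ∑ k ∈ Finset.range m, ((if k < N then ε k else 0) + D * b k) :=
          Finset.sum_le_sum hpt
      _ = (∑ k ∈ Finset.range m, if k < N then ε k else 0)
            + D * ∑ k ∈ Finset.range m, b k := by
          rw [Finset.sum_add_distrib, Finset.mul_sum]
      _ ≤ S := by
          apply add_le_add
          · rw [← Finset.sum_filter]
            apply Finset.sum_le_sum_of_subset_of_nonneg
            · intro x hx
              rw [Finset.mem_filter] at hx
              exact Finset.mem_range.mpr hx.2
            · exact fun i _ _ => hε0 i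
          · exact mul_le_mul_of_nonneg_left
              (Summable.sum_le_tsum (Finset.range m) (fun k _ => hb0 k) hasum) hD
  -- total bound
  set R : ℝ := RE Y X0 + S with hRdef
  have htotal : ∀ K, ∑ k ∈ Finset.range (K + 1),
      a k * ((Y - X k) ⬝ᵥ C.mulVec (X k)) ≤ R := by
    intro K
    have h1 : ∑ k ∈ Finset.range (K + 1), a k * ((Y - X k) ⬝ᵥ C.mulVec (X k))
        ≤ ∑ k ∈ Finset.range (K + 1), (RE Y (X k) - RE Y (X (k + 1)) + ε k) :=
      Finset.sum_le_sum fun k _ => hstep k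
    rw [Finset.sum_add_distrib, Finset.sum_range_sub' (fun k => RE Y (X k))] at h1
    have h2 := RE_nonneg hY (hint (K + 1))
    have h3 := hεsum (K + 1)
    have h4 : RE Y (X 0) = RE Y X0 := rfl
    linarith
  -- positivity of pSum and lower bound
  have hA : ∀ K, 0 < pSum a K :=
    fun K => Finset.sum_pos (fun k _ => hapos k) (Finset.nonempty_range_iff.mpr (Nat.succ_ne_zero K))
  have hlow : ∀ K, -B ≤ (pSum a K)⁻¹ *
      ∑ k ∈ Finset.range (K + 1), a k * ((Y - X k) ⬝ᵥ C.mulVec (X k)) := by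
    intro K
    have hterm : ∀ k, -B * a k ≤ a k * ((Y - X k) ⬝ᵥ C.mulVec (X k)) := by
      intro k
      have hc0 : ∀ i, 0 ≤ C.mulVec (X k) i := mulVec_nonneg' hC (fun i => ((hint k).1 i).le)
      have hcB : ∀ i, C.mulVec (X k) i ≤ B := mulVec_le_B hC (fun i => ((hint k).1 i).le) (hint k).2
      have hYc : 0 ≤ Y ⬝ᵥ C.mulVec (X k) :=
        Finset.sum_nonneg fun i _ => mul_nonneg (hY.1 i) (hc0 i)
      have hXc : X k ⬝ᵥ C.mulVec (X k) ≤ B := by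
        calc X k ⬝ᵥ C.mulVec (X k) ≤ ∑ i, X k i * B :=
              Finset.sum_le_sum fun i _ => mul_le_mul_of_nonneg_left (hcB i) ((hint k).1 i).le
          _ = B := by rw [← Finset.sum_mul, (hint k).2, one_mul]
      have hsplit : (Y - X k) ⬝ᵥ C.mulVec (X k)
          = Y ⬝ᵥ C.mulVec (X k) - X k ⬝ᵥ C.mulVec (X k) := sub_dotProduct _ _ _
      have : -B ≤ (Y - X k) ⬝ᵥ C.mulVec (X k) := by rw [hsplit]; linarith
      nlinarith [hapos k]
    have hsum : -B * pSum a K ≤ ∑ k ∈ Finset.range (K + 1), a k * ((Y - X k) ⬝ᵥ C.mulVec (X k)) := by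
      have : -B * pSum a K = ∑ k ∈ Finset.range (K + 1), -B * a k := by
        rw [← Finset.mul_sum]; rfl
      rw [this]
      exact Finset.sum_le_sum fun k _ => hterm k
    have hAK := hA K
    have hkey : (pSum a K)⁻¹ * (-B * pSum a K) = -B := by
      field_simp
    have := mul_le_mul_of_nonneg_left hsum (inv_nonneg.mpr hAK.le)
    linarith
  -- conclude
  have hfg : ∀ K, (pSum a K)⁻¹ *
      (∑ k ∈ Finset.range (K + 1), a k * ((Y - X k) ⬝ᵥ C.mulVec (X k)))
      ≤ (pSum a K)⁻¹ * R :=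
    fun K => mul_le_mul_of_nonneg_left (htotal K) (inv_nonneg.mpr (hA K).le)
  have hg : Tendsto (fun K => (pSum a K)⁻¹ * R) atTop (𝓝 0) := by
    have h1 : Tendsto (fun K => (pSum a K)⁻¹) atTop (𝓝 0) := hadiv.inv_tendsto_atTop
    simpa using h1.mul_const R
  have hco : IsCoboundedUnder (· ≤ ·) atTop (fun K => (pSum a K)⁻¹ *
      ∑ k ∈ Finset.range (K + 1), a k * ((Y - X k) ⬝ᵥ C.mulVec (X k))) :=
    isCoboundedUnder_le_of_le atTop hlow
  calc Filter.limsup (fun K => (pSum a K)⁻¹ *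
        ∑ k ∈ Finset.range (K + 1), a k * ((Y - X k) ⬝ᵥ C.mulVec (X k))) atTop
      ≤ Filter.limsup (fun K => (pSum a K)⁻¹ * R) atTop :=
        limsup_le_limsup (Eventually.of_forall hfg) hco hg.isBoundedUnder_le
    _ = 0 := hg.limsup_eq
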